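/- Let k > 0, K > k, κ = min(1, K/k − 1), m > 0, Λ > 0, b₂ > 0, c < ∞, ε₁ ∈ (0, m) with b₂ ε₁^{2κ} ≤ 1/2. Let f: ℝ → ℝ be continuous on ℝ and differentiable on ℝ∖{0}, satisfying |f(τ) − |τ|^k| ≤ c|τ|^K and |τ f'(τ) − k|τ|^k| ≤ c|τ|^K for all τ ≠ 0, and |f(τ)| ≤ (c+1)|τ|^k for all τ. Then there exists C < ∞ such that for every ε ∈ (0, ε₁) and all real numbers V̂, Û, Ṽ, Ũ ∈ [−Λ, Λ] with V̂ > 0, |Ṽ| ≤ b₂ ε^{2κ} V̂, and ε₁|Û + Ũ| ≤ (V̂ + Ṽ)/2, setting V = V̂ + Ṽ, U = Û + Ũ, and τ = ε^{2/k}(V² − ε²U²) (which is then strictly positive), one has: | −2 f'(τ) ε^{2/k − 2} V² − ε^{−2} f(τ) + (1+2k) V̂^{2k} | ≤ C ε^{2κ}, | 2 f'(τ) ε^{2/k} V U | ≤ C ε^{2κ}, and | f(τ) − 2 f'(τ) ε^{2+2/k} U² | ≤ C ε^{2κ}. -/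

import Mathlib

lemma rpow_lip (p : ℝ) : ∃ M : ℝ, 0 ≤ M ∧ ∀ x ∈ Set.Icc (1/2:ℝ) (3/2),
    ∀ y ∈ Set.Icc (1/2:ℝ) (3/2), |x ^ p - y ^ p| ≤ M * |x - y| := by
  refine ⟨|p| * max ((1/2:ℝ) ^ (p-1)) ((3/2:ℝ) ^ (p-1)), by positivity, ?_⟩
  intro x hx y hy
  have bound : ∀ z ∈ Set.Icc (1/2:ℝ) (3/2),
      ‖p * z ^ (p-1)‖ ≤ |p| * max ((1/2:ℝ) ^ (p-1)) ((3/2:ℝ) ^ (p-1)) := by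
    intro z hz
    have hz0 : (0:ℝ) < z := lt_of_lt_of_le (by norm_num) hz.1
    rw [Real.norm_eq_abs, abs_mul, abs_of_nonneg (Real.rpow_nonneg hz0.le _)]
    apply mul_le_mul_of_nonneg_left _ (abs_nonneg p)
    rcases le_or_gt 0 (p-1) with h | h
    · exact le_trans (Real.rpow_le_rpow hz0.le hz.2 h) (le_max_right _ _)
    · exact le_trans (Real.rpow_le_rpow_of_nonpos (by norm_num) hz.1 h.le) (le_max_left _ _)
  have key := (convex_Icc (1/2:ℝ) (3/2)).norm_image_sub_le_of_norm_hasDerivWithin_le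
    (f := fun z => z ^ p) (f' := fun z => p * z ^ (p-1))
    (fun z hz => (Real.hasDerivAt_rpow_const (Or.inl (by
      have := hz.1; intro h; rw [h] at this; norm_num at this))).hasDerivWithinAt)
    bound hy hx
  simpa [Real.norm_eq_abs] using key

set_option maxHeartbeats 1000000 in
/-- Lemma `g-w-small`: smallness of the entries of the Jacobian
`∂G/∂(Ṽ,Ũ)`: under the stated assumptions on `f` and with
`V = V̂+Ṽ`, `U = Û+Ũ`, `τ = ε^{2/k}(V²−ε²U²)` (which is strictly positive),
the three entries
`−2f'(τ)ε^{2/k−2}V² − ε⁻²f(τ) + (1+2k)V̂^{2k}`, `2f'(τ)ε^{2/k}VU`,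
`f(τ) − 2f'(τ)ε^{2+2/k}U²` are all `O(ε^{2κ})`, where `κ = min(1, K/k − 1)`. -/
theorem stmt10 (k K : ℝ) (hk : 0 < k) (hkK : k < K) (m Λ b₂ c ε₁ : ℝ)
    (hm : 0 < m) (hΛ : 0 < Λ) (hb₂ : 0 < b₂) (hε₁ : ε₁ ∈ Set.Ioo 0 m)
    (hb₂ε₁ : b₂ * ε₁ ^ (2 * min 1 (K / k - 1)) ≤ 1 / 2)
    (f : ℝ → ℝ) (hfc : Continuous f)
    (hfd : ∀ τ : ℝ, τ ≠ 0 → DifferentiableAt ℝ f τ)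
    (hf1 : ∀ τ : ℝ, τ ≠ 0 → |f τ - |τ| ^ k| ≤ c * |τ| ^ K)
    (hf2 : ∀ τ : ℝ, τ ≠ 0 → |τ * deriv f τ - k * |τ| ^ k| ≤ c * |τ| ^ K)
    (hf3 : ∀ τ : ℝ, |f τ| ≤ (c + 1) * |τ| ^ k) :
    ∃ C : ℝ, ∀ ε ∈ Set.Ioo 0 ε₁, ∀ Vh Uh Vt Ut : ℝ,
      Vh ∈ Set.Icc (-Λ) Λ → Uh ∈ Set.Icc (-Λ) Λ →
      Vt ∈ Set.Icc (-Λ) Λ → Ut ∈ Set.Icc (-Λ) Λ →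
      0 < Vh → |Vt| ≤ b₂ * ε ^ (2 * min 1 (K / k - 1)) * Vh →
      ε₁ * |Uh + Ut| ≤ (Vh + Vt) / 2 →
      ∀ V U τ : ℝ, V = Vh + Vt → U = Uh + Ut →
      τ = ε ^ (2 / k) * (V ^ 2 - ε ^ 2 * U ^ 2) →
      0 < τ ∧
      |(-(2 * deriv f τ * ε ^ (2 / k - 2) * V ^ 2) - ε ^ (-2 : ℝ) * f τ
          + (1 + 2 * k) * Vh ^ (2 * k))| ≤ C * ε ^ (2 * min 1 (K / k - 1)) ∧
      |2 * deriv f τ * ε ^ (2 / k) * V * U| ≤ C * ε ^ (2 * min 1 (K / k - 1)) ∧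
      |f τ - 2 * deriv f τ * ε ^ (2 + 2 / k) * U ^ 2|
          ≤ C * ε ^ (2 * min 1 (K / k - 1)) := by
  obtain ⟨M₁, hM₁, lip₁⟩ := rpow_lip (2*k)
  obtain ⟨M₂, hM₂, lip₂⟩ := rpow_lip k
  obtain ⟨M₃, hM₃, lip₃⟩ := rpow_lip (k-1)
  set κ := min 1 (K/k - 1) with hκdef
  have hε₁0 : 0 < ε₁ := hε₁.1
  have hε₁m : ε₁ < m := hε₁.2
  have hKk : 1 < K/k := (one_lt_div hk).mpr hkK
  have hκpos : 0 < κ := lt_min one_pos (by linarith)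
  have hκ1 : κ ≤ 1 := min_le_left _ _
  have hκ2 : κ ≤ K/k - 1 := min_le_right _ _
  have hK : 0 < K := lt_trans hk hkK
  have hc : 0 ≤ c := by
    have h := hf1 1 one_ne_zero
    simp only [abs_one, Real.one_rpow, mul_one] at h
    exact le_trans (abs_nonneg _) h
  have hre : ∀ x : ℝ, x ^ (2:ℝ) = x ^ 2 := fun x => by
    rw [show (2:ℝ) = ((2:ℕ):ℝ) by norm_num, Real.rpow_natCast]
  set B := 3/2*Λ with hBdef
  have hB : 0 < B := by rw [hBdef]; linarith
  have hBk0 : 0 ≤ B^(2*k) := Real.rpow_nonneg hB.le _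
  have hBK0 : 0 ≤ B^(2*K) := Real.rpow_nonneg hB.le _
  have hm2κ : 0 ≤ m^(2-2*κ) := Real.rpow_nonneg hm.le _
  set S := m^(2-2*κ)/(4*ε₁^2) with hSdef
  set RK := c*B^(2*K)*m^(2*K/k-2-2*κ) with hRKdef
  set XC := k*m^(2-2*κ)*B^(2*k) + RK*m^2 with hXCdef
  set C₁ := (1+2*k)*(B^(2*k)*(M₁*b₂)) with hC₁def
  set C₂ := B^(2*k)*(M₂*S) with hC₂def
  set C₃ := 2*k*(B^(2*k)*(M₃*S)) with hC₃def
  set CE1 := C₁ + C₂ + C₃ + (8/3)*RK + RK with hCE1def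
  set CE2 := 4/(3*ε₁)*XC with hCE2def
  set CE3 := m^(2-2*κ)*B^(2*k) + RK*m^2 + (2/3)*XC with hCE3def
  have hS0 : 0 ≤ S := by
    rw [hSdef]
    exact div_nonneg hm2κ (by positivity)
  have hRK0 : 0 ≤ RK := by
    rw [hRKdef]
    exact mul_nonneg (mul_nonneg hc hBK0) (Real.rpow_nonneg hm.le _)
  have hXC0 : 0 ≤ XC := by
    rw [hXCdef]
    exact add_nonneg (mul_nonneg (mul_nonneg hk.le hm2κ) hBk0)
      (mul_nonneg hRK0 (sq_nonneg m))
  have hC₁0 : 0 ≤ C₁ := by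
    rw [hC₁def]
    exact mul_nonneg (by linarith) (mul_nonneg hBk0 (mul_nonneg hM₁ hb₂.le))
  have hC₂0 : 0 ≤ C₂ := mul_nonneg hBk0 (mul_nonneg hM₂ hS0)
  have hC₃0 : 0 ≤ C₃ := by
    rw [hC₃def]
    exact mul_nonneg (by linarith) (mul_nonneg hBk0 (mul_nonneg hM₃ hS0))
  have hCE1 : 0 ≤ CE1 := by rw [hCE1def]; linarith
  have hCE2 : 0 ≤ CE2 := by
    rw [hCE2def]
    exact mul_nonneg (div_nonneg (by norm_num) (by linarith)) hXC0
  have hCE3 : 0 ≤ CE3 := by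
    rw [hCE3def]
    exact add_nonneg (add_nonneg (mul_nonneg hm2κ hBk0)
      (mul_nonneg hRK0 (sq_nonneg m))) (mul_nonneg (by norm_num) hXC0)
  refine ⟨CE1 + CE2 + CE3, ?_⟩
  intro ε hε Vh Uh Vt Ut hVhm hUhm hVtm hUtm hVhpos hVtb hUb V U τ hV hU hτ
  have hε0 : 0 < ε := hε.1
  have hεε₁ : ε < ε₁ := hε.2
  have hεm : ε < m := lt_trans hεε₁ hε₁m
  have ht0 : 0 ≤ ε^(2*κ) := Real.rpow_nonneg hε0.le _
  have hε2pos : 0 < ε^2 := pow_pos hε0 2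
  have hεκhalf : b₂ * ε^(2*κ) ≤ 1/2 :=
    le_trans (mul_le_mul_of_nonneg_left
      (Real.rpow_le_rpow hε0.le hεε₁.le (by linarith)) hb₂.le) hb₂ε₁
  have hVt2 : |Vt| ≤ Vh/2 := by
    refine le_trans hVtb ?_
    have := mul_le_mul_of_nonneg_right hεκhalf hVhpos.le
    linarith
  have hVtabs := abs_le.mp hVt2
  have hVlo : Vh/2 ≤ V := by rw [hV]; linarith [hVtabs.1]
  have hVhi : V ≤ 3/2*Vh := by rw [hV]; linarith [hVtabs.2]
  have hVpos : 0 < V := lt_of_lt_of_le (by linarith) hVlo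
  have hV2pos : 0 < V^2 := pow_pos hVpos 2
  have hVhB : Vh ≤ B := by rw [hBdef]; linarith [hVhm.2]
  have hVB : V ≤ B := by rw [hBdef]; linarith [hVhm.2]
  have hUb' : ε₁ * |U| ≤ V/2 := by rw [hU, hV]; exact hUb
  have hU2 : ε * |U| ≤ V/2 :=
    le_trans (mul_le_mul_of_nonneg_right hεε₁.le (abs_nonneg U)) hUb'
  have hU2sq : ε^2 * U^2 ≤ V^2/4 := by
    have h := mul_self_le_mul_self (mul_nonneg hε0.le (abs_nonneg U)) hU2
    have e : (ε*|U|)*(ε*|U|) = ε^2*U^2 := by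
      rw [mul_mul_mul_comm, ← sq, ← sq, sq_abs]
    rw [e] at h
    linarith [h]
  have hU1sq : ε₁^2 * U^2 ≤ V^2/4 := by
    have h := mul_self_le_mul_self (mul_nonneg hε₁0.le (abs_nonneg U)) hUb'
    have e : (ε₁*|U|)*(ε₁*|U|) = ε₁^2*U^2 := by
      rw [mul_mul_mul_comm, ← sq, ← sq, sq_abs]
    rw [e] at h
    linarith [h]
  have hUsq : U^2 ≤ V^2/(4*ε₁^2) := by
    rw [le_div_iff₀ (by positivity : (0:ℝ) < 4*ε₁^2)]
    linarith [hU1sq]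
  set D := V^2 - ε^2*U^2 with hDdef
  have hDlo : 3/4*V^2 ≤ D := by rw [hDdef]; linarith [hU2sq]
  have hDhi : D ≤ V^2 := by
    rw [hDdef]
    have : 0 ≤ ε^2*U^2 := mul_nonneg (sq_nonneg ε) (sq_nonneg U)
    linarith
  have hDpos : 0 < D := lt_of_lt_of_le (by linarith) hDlo
  have hτpos : 0 < τ := by
    rw [hτ]; exact mul_pos (Real.rpow_pos_of_pos hε0 _) hDpos
  refine ⟨hτpos, ?_⟩
  -- epsilon power estimates
  have hε2 : ε^2 ≤ m^(2-2*κ) * ε^(2*κ) := by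
    have h1 : ε^2 = ε^(2-2*κ) * ε^(2*κ) := by
      rw [← Real.rpow_add hε0, ← hre ε]; congr 1; ring
    rw [h1]
    exact mul_le_mul_of_nonneg_right
      (Real.rpow_le_rpow hε0.le hεm.le (by linarith)) ht0
  have hεm2 : ε^2 ≤ m^2 := pow_le_pow_left₀ hε0.le hεm.le 2
  have hεKs : ε^(2*K/k) ≤ m^(2*K/k-2-2*κ) * ε^(2*κ) * ε^2 := by
    have h1 : ε^(2*K/k) = ε^(2*K/k-2-2*κ) * ε^(2*κ) * ε^2 := by
      rw [← hre ε, ← Real.rpow_add hε0, ← Real.rpow_add hε0]; congr 1; ring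
    rw [h1]
    have hq : 0 ≤ 2*K/k-2-2*κ := by
      have h2 : 2*K/k = 2*(K/k) := by ring
      rw [h2]; linarith
    exact mul_le_mul_of_nonneg_right (mul_le_mul_of_nonneg_right
      (Real.rpow_le_rpow hε0.le hεm.le hq) ht0) hε2pos.le
  -- powers of D and V
  have hV2B : V^2 ≤ B^2 := pow_le_pow_left₀ hVpos.le hVB 2
  have hDB : D ≤ B^2 := le_trans hDhi hV2B
  have hB2k : (B^2:ℝ)^k = B^(2*k) := by rw [Real.rpow_mul hB.le, hre]
  have hB2K : (B^2:ℝ)^K = B^(2*K) := by rw [Real.rpow_mul hB.le, hre]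
  have hDk : D^k ≤ B^(2*k) := by
    rw [← hB2k]; exact Real.rpow_le_rpow hDpos.le hDB hk.le
  have hDK : D^K ≤ B^(2*K) := by
    rw [← hB2K]; exact Real.rpow_le_rpow hDpos.le hDB hK.le
  have hDk0 : 0 ≤ D^k := Real.rpow_nonneg hDpos.le _
  have hVk : V^(2*k) ≤ B^(2*k) := Real.rpow_le_rpow hVpos.le hVB (by linarith)
  have hVhk : Vh^(2*k) ≤ B^(2*k) := Real.rpow_le_rpow hVhpos.le hVhB (by linarith)
  have hVk0 : 0 ≤ V^(2*k) := Real.rpow_nonneg hVpos.le _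
  -- tau powers
  have hτk : τ^k = ε^2 * D^k := by
    rw [hτ, Real.mul_rpow (Real.rpow_nonneg hε0.le _) hDpos.le,
      ← Real.rpow_mul hε0.le, div_mul_cancel₀ 2 hk.ne', hre]
  have hτK : τ^K = ε^(2*K/k) * D^K := by
    rw [hτ, Real.mul_rpow (Real.rpow_nonneg hε0.le _) hDpos.le,
      ← Real.rpow_mul hε0.le]
    congr 2
    field_simp
  -- remainders
  set r₁ := f τ - ε^2 * D^k with hr₁def
  set r₂ := τ * deriv f τ - k * (ε^2 * D^k) with hr₂def
  have hr₁ : |r₁| ≤ RK * ε^(2*κ) * ε^2 := by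
    have h := hf1 τ (ne_of_gt hτpos)
    rw [abs_of_pos hτpos, hτk, hτK] at h
    calc |r₁| ≤ c * (ε^(2*K/k) * D^K) := h
      _ ≤ c * ((m^(2*K/k-2-2*κ) * ε^(2*κ) * ε^2) * B^(2*K)) := by
          refine mul_le_mul_of_nonneg_left ?_ hc
          exact mul_le_mul hεKs hDK (Real.rpow_nonneg hDpos.le _)
            (mul_nonneg (mul_nonneg (Real.rpow_nonneg hm.le _) ht0) hε2pos.le)
      _ = RK * ε^(2*κ) * ε^2 := by rw [hRKdef]; ring
  have hr₂ : |r₂| ≤ RK * ε^(2*κ) * ε^2 := by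
    have h := hf2 τ (ne_of_gt hτpos)
    rw [abs_of_pos hτpos, hτk, hτK] at h
    calc |r₂| ≤ c * (ε^(2*K/k) * D^K) := h
      _ ≤ c * ((m^(2*K/k-2-2*κ) * ε^(2*κ) * ε^2) * B^(2*K)) := by
          refine mul_le_mul_of_nonneg_left ?_ hc
          exact mul_le_mul hεKs hDK (Real.rpow_nonneg hDpos.le _)
            (mul_nonneg (mul_nonneg (Real.rpow_nonneg hm.le _) ht0) hε2pos.le)
      _ = RK * ε^(2*κ) * ε^2 := by rw [hRKdef]; ring
  have hr₁m : |r₁| ≤ RK*ε^(2*κ)*m^2 :=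
    le_trans hr₁ (mul_le_mul_of_nonneg_left hεm2 (mul_nonneg hRK0 ht0))
  have hr₂m : |r₂| ≤ RK*ε^(2*κ)*m^2 :=
    le_trans hr₂ (mul_le_mul_of_nonneg_left hεm2 (mul_nonneg hRK0 ht0))
  have hfτ : f τ = ε^2 * D^k + r₁ := by rw [hr₁def]; ring
  have hderiv : deriv f τ = (k * (ε^2 * D^k) + r₂) / τ := by
    rw [hr₂def]
    field_simp
    ring
  -- bound on the combination X = k ε² D^k + r₂
  have hX : |k * (ε^2 * D^k) + r₂| ≤ XC * ε^(2*κ) := by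
    calc |k * (ε^2 * D^k) + r₂| ≤ |k * (ε^2 * D^k)| + |r₂| := abs_add_le _ _
      _ = k * (ε^2 * D^k) + |r₂| := by
          rw [abs_of_nonneg (mul_nonneg hk.le (mul_nonneg (sq_nonneg ε) hDk0))]
      _ ≤ k * ((m^(2-2*κ) * ε^(2*κ)) * B^(2*k)) + RK * ε^(2*κ) * m^2 := by
          refine add_le_add (mul_le_mul_of_nonneg_left ?_ hk.le) hr₂m
          exact mul_le_mul hε2 hDk hDk0 (mul_nonneg hm2κ ht0)
      _ = XC * ε^(2*κ) := by rw [hXCdef]; ring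
  -- ratios in [1/2, 3/2]
  have h1mem : (1:ℝ) ∈ Set.Icc (1/2:ℝ) (3/2) := by norm_num
  have htmem : V/Vh ∈ Set.Icc (1/2:ℝ) (3/2) :=
    ⟨by rw [le_div_iff₀ hVhpos]; linarith, by rw [div_le_iff₀ hVhpos]; linarith⟩
  have hsmem : D/V^2 ∈ Set.Icc (1/2:ℝ) (3/2) := by
    constructor
    · rw [le_div_iff₀ hV2pos]; linarith
    · rw [div_le_iff₀ hV2pos]; linarith
  have h1t : |1 - V/Vh| ≤ b₂ * ε^(2*κ) := by
    have heq : 1 - V/Vh = -Vt/Vh := by rw [hV]; field_simp; ring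
    rw [heq, abs_div, abs_neg, abs_of_pos hVhpos, div_le_iff₀ hVhpos]
    exact hVtb
  have h1s : |1 - D/V^2| ≤ S * ε^(2*κ) := by
    have heq : 1 - D/V^2 = ε^2*U^2/V^2 := by
      rw [hDdef]; field_simp; ring
    rw [heq, abs_of_nonneg (by positivity), div_le_iff₀ hV2pos]
    calc ε^2*U^2 ≤ (m^(2-2*κ) * ε^(2*κ)) * U^2 :=
          mul_le_mul_of_nonneg_right hε2 (sq_nonneg U)
      _ ≤ (m^(2-2*κ) * ε^(2*κ)) * (V^2/(4*ε₁^2)) :=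
          mul_le_mul_of_nonneg_left hUsq (mul_nonneg hm2κ ht0)
      _ = S * ε^(2*κ) * V^2 := by rw [hSdef]; ring
  -- Lipschitz-based bounds
  have hVpow : V^(2*k) = Vh^(2*k) * (V/Vh)^(2*k) := by
    rw [← Real.mul_rpow hVhpos.le (div_nonneg hVpos.le hVhpos.le)]
    congr 1
    field_simp
  have ha : |Vh^(2*k) - V^(2*k)| ≤ B^(2*k) * (M₁ * (b₂ * ε^(2*κ))) := by
    have hlip := lip₁ 1 h1mem (V/Vh) htmem
    rw [Real.one_rpow] at hlip
    have heq : Vh^(2*k) - V^(2*k) = Vh^(2*k) * (1 - (V/Vh)^(2*k)) := by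
      rw [hVpow]; ring
    rw [heq, abs_mul, abs_of_nonneg (Real.rpow_nonneg hVhpos.le _)]
    exact mul_le_mul hVhk (le_trans hlip (mul_le_mul_of_nonneg_left h1t hM₁))
      (abs_nonneg _) hBk0
  have hV2k : V^(2*k) = (V^2:ℝ)^k := by rw [Real.rpow_mul hVpos.le, hre]
  have hDpow : D^k = V^(2*k) * (D/V^2)^k := by
    rw [hV2k, ← Real.mul_rpow (sq_nonneg V) (div_nonneg hDpos.le (sq_nonneg V))]
    congr 1
    field_simp
  have hbb : |V^(2*k) - D^k| ≤ B^(2*k) * (M₂ * (S * ε^(2*κ))) := by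
    have hlip := lip₂ 1 h1mem (D/V^2) hsmem
    rw [Real.one_rpow] at hlip
    have heq : V^(2*k) - D^k = V^(2*k) * (1 - (D/V^2)^k) := by rw [hDpow]; ring
    rw [heq, abs_mul, abs_of_nonneg hVk0]
    exact mul_le_mul hVk (le_trans hlip (mul_le_mul_of_nonneg_left h1s hM₂))
      (abs_nonneg _) hBk0
  have hcc : |V^(2*k) - D^k*V^2/D| ≤ B^(2*k) * (M₃ * (S * ε^(2*κ))) := by
    have hckeq : D^k*V^2/D = V^(2*k) * (D/V^2)^(k-1) := by
      rw [Real.rpow_sub_one (ne_of_gt (div_pos hDpos hV2pos)), hDpow]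
      field_simp
    have hlip := lip₃ 1 h1mem (D/V^2) hsmem
    rw [Real.one_rpow] at hlip
    have heq : V^(2*k) - D^k*V^2/D = V^(2*k) * (1 - (D/V^2)^(k-1)) := by
      rw [hckeq]; ring
    rw [heq, abs_mul, abs_of_nonneg hVk0]
    exact mul_le_mul hVk (le_trans hlip (mul_le_mul_of_nonneg_left h1s hM₃))
      (abs_nonneg _) hBk0
  refine ⟨?_, ?_, ?_⟩
  -- Entry 1
  · have hE1eq : -(2 * deriv f τ * ε^(2/k-2) * V^2) - ε^(-2:ℝ) * f τ
        + (1+2*k) * Vh^(2*k)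
        = (1+2*k)*(Vh^(2*k) - V^(2*k)) + (V^(2*k) - D^k)
          + 2*k*(V^(2*k) - D^k*V^2/D) - 2*r₂*V^2/(ε^2*D) - r₁/ε^2 := by
      have hsub : ε^(2/k-2:ℝ) = ε^(2/k) / ε^2 := by
        rw [Real.rpow_sub hε0, hre]
      have hneg : ε^(-2:ℝ) = (ε^2)⁻¹ := by
        rw [show ((-2:ℝ)) = -(2:ℝ) by norm_num, Real.rpow_neg hε0.le, hre]
      have hεk0 : ε^(2/k) ≠ 0 := ne_of_gt (Real.rpow_pos_of_pos hε0 _)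
      rw [hderiv, hsub, hneg, hfτ, hτ]
      field_simp
      ring
    have hA1 : |(1+2*k)*(Vh^(2*k) - V^(2*k))| ≤ C₁ * ε^(2*κ) := by
      rw [abs_mul, abs_of_pos (by linarith : (0:ℝ) < 1+2*k)]
      calc (1+2*k)*|Vh^(2*k) - V^(2*k)| ≤ (1+2*k)*(B^(2*k)*(M₁*(b₂*ε^(2*κ)))) :=
            mul_le_mul_of_nonneg_left ha (by linarith)
        _ = C₁ * ε^(2*κ) := by rw [hC₁def]; ring
    have hA2 : |V^(2*k) - D^k| ≤ C₂ * ε^(2*κ) := by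
      refine le_trans hbb (le_of_eq ?_)
      rw [hC₂def]; ring
    have hA3 : |2*k*(V^(2*k) - D^k*V^2/D)| ≤ C₃ * ε^(2*κ) := by
      rw [abs_mul, abs_of_nonneg (by linarith : (0:ℝ) ≤ 2*k)]
      calc 2*k*|V^(2*k) - D^k*V^2/D| ≤ 2*k*(B^(2*k)*(M₃*(S*ε^(2*κ)))) :=
            mul_le_mul_of_nonneg_left hcc (by linarith)
        _ = C₃ * ε^(2*κ) := by rw [hC₃def]; ring
    have hA4 : |2*r₂*V^2/(ε^2*D)| ≤ (8/3)*RK*ε^(2*κ) := by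
      rw [abs_div, abs_of_pos (mul_pos hε2pos hDpos), abs_mul, abs_mul, abs_two,
        abs_of_nonneg (sq_nonneg V), div_le_iff₀ (mul_pos hε2pos hDpos)]
      linarith [mul_le_mul hr₂ (by linarith : V^2 ≤ 4/3*D) (sq_nonneg V)
        (mul_nonneg (mul_nonneg hRK0 ht0) hε2pos.le)]
    have hA5 : |r₁/ε^2| ≤ RK*ε^(2*κ) := by
      rw [abs_div, abs_of_pos hε2pos, div_le_iff₀ hε2pos]
      exact hr₁
    calc |(-(2 * deriv f τ * ε^(2/k-2) * V^2) - ε^(-2:ℝ) * f τ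
          + (1+2*k) * Vh^(2*k))|
        = |(1+2*k)*(Vh^(2*k) - V^(2*k)) + (V^(2*k) - D^k)
          + 2*k*(V^(2*k) - D^k*V^2/D) - 2*r₂*V^2/(ε^2*D) - r₁/ε^2| := by
          rw [hE1eq]
      _ ≤ |(1+2*k)*(Vh^(2*k) - V^(2*k)) + (V^(2*k) - D^k)
          + 2*k*(V^(2*k) - D^k*V^2/D) - 2*r₂*V^2/(ε^2*D)| + |r₁/ε^2| := abs_sub _ _
      _ ≤ |(1+2*k)*(Vh^(2*k) - V^(2*k)) + (V^(2*k) - D^k)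
          + 2*k*(V^(2*k) - D^k*V^2/D)| + |2*r₂*V^2/(ε^2*D)| + |r₁/ε^2| := by
          linarith [abs_sub ((1+2*k)*(Vh^(2*k) - V^(2*k)) + (V^(2*k) - D^k)
            + 2*k*(V^(2*k) - D^k*V^2/D)) (2*r₂*V^2/(ε^2*D))]
      _ ≤ |(1+2*k)*(Vh^(2*k) - V^(2*k))| + |V^(2*k) - D^k|
          + |2*k*(V^(2*k) - D^k*V^2/D)| + |2*r₂*V^2/(ε^2*D)| + |r₁/ε^2| := by
          linarith [abs_add_le ((1+2*k)*(Vh^(2*k) - V^(2*k)) + (V^(2*k) - D^k))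
            (2*k*(V^(2*k) - D^k*V^2/D)),
            abs_add_le ((1+2*k)*(Vh^(2*k) - V^(2*k))) (V^(2*k) - D^k)]
      _ ≤ C₁*ε^(2*κ) + C₂*ε^(2*κ) + C₃*ε^(2*κ) + (8/3)*RK*ε^(2*κ) + RK*ε^(2*κ) := by
          linarith
      _ = CE1 * ε^(2*κ) := by rw [hCE1def]; ring
      _ ≤ (CE1 + CE2 + CE3) * ε^(2*κ) := by
          linarith [mul_nonneg hCE2 ht0, mul_nonneg hCE3 ht0]
  -- Entry 2
  · have hE2eq : 2 * deriv f τ * ε^(2/k) * V * U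
        = 2*(k*(ε^2*D^k) + r₂)*(V*U)/D := by
      have hεk0 : ε^(2/k) ≠ 0 := ne_of_gt (Real.rpow_pos_of_pos hε0 _)
      rw [hderiv, hτ]
      field_simp
    have hVUD : V*|U|/D ≤ 2/(3*ε₁) := by
      rw [div_le_div_iff₀ hDpos (by linarith : (0:ℝ) < 3*ε₁)]
      linarith [mul_le_mul_of_nonneg_left hUb' (by linarith : (0:ℝ) ≤ 3*V), hDlo]
    rw [hE2eq]
    calc |2*(k*(ε^2*D^k) + r₂)*(V*U)/D|
        = 2*|k*(ε^2*D^k) + r₂| *(V*|U|)/D := by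
          rw [abs_div, abs_of_pos hDpos, abs_mul, abs_mul, abs_mul, abs_two,
            abs_of_pos hVpos]
      _ = 2*|k*(ε^2*D^k) + r₂| *(V*|U|/D) := by ring
      _ ≤ 2*(XC*ε^(2*κ))*(2/(3*ε₁)) := by
          refine mul_le_mul (mul_le_mul_of_nonneg_left hX (by norm_num)) hVUD
            (div_nonneg (mul_nonneg hVpos.le (abs_nonneg U)) hDpos.le)
            (mul_nonneg (by norm_num) (mul_nonneg hXC0 ht0))
      _ = CE2 * ε^(2*κ) := by rw [hCE2def]; field_simp; ring
      _ ≤ (CE1 + CE2 + CE3) * ε^(2*κ) := by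
          linarith [mul_nonneg hCE1 ht0, mul_nonneg hCE3 ht0]
  -- Entry 3
  · have hsplit3 : ε^(2+2/k:ℝ) = ε^2 * ε^(2/k) := by
      rw [Real.rpow_add hε0, hre]
    have hE3eq : f τ - 2*deriv f τ*ε^(2+2/k)*U^2
        = ε^2*D^k + r₁ - 2*(k*(ε^2*D^k)+r₂)*(ε^2*U^2/D) := by
      have hεk0 : ε^(2/k) ≠ 0 := ne_of_gt (Real.rpow_pos_of_pos hε0 _)
      rw [hfτ, hderiv, hsplit3, hτ]
      field_simp
    have hUUD : ε^2*U^2/D ≤ 1/3 := by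
      rw [div_le_iff₀ hDpos]
      linarith [hU2sq, hDlo]
    have hUUD0 : 0 ≤ ε^2*U^2/D :=
      div_nonneg (mul_nonneg (sq_nonneg ε) (sq_nonneg U)) hDpos.le
    rw [hE3eq]
    calc |ε^2*D^k + r₁ - 2*(k*(ε^2*D^k)+r₂)*(ε^2*U^2/D)|
        ≤ |ε^2*D^k + r₁| + |2*(k*(ε^2*D^k)+r₂)*(ε^2*U^2/D)| := abs_sub _ _
      _ ≤ (|ε^2*D^k| + |r₁|) + 2*|k*(ε^2*D^k)+r₂| *(ε^2*U^2/D) := by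
          have h2 : |2*(k*(ε^2*D^k)+r₂)*(ε^2*U^2/D)|
              = 2*|k*(ε^2*D^k)+r₂| *(ε^2*U^2/D) := by
            rw [abs_mul, abs_mul, abs_two, abs_of_nonneg hUUD0]
          linarith [abs_add_le (ε^2*D^k) r₁]
      _ ≤ ((m^(2-2*κ)*ε^(2*κ))*B^(2*k) + RK*ε^(2*κ)*m^2)
          + 2*(XC*ε^(2*κ))*(1/3) := by
          have e1 : |ε^2*D^k| = ε^2*D^k :=
            abs_of_nonneg (mul_nonneg (sq_nonneg ε) hDk0)
          have e2 : ε^2*D^k ≤ (m^(2-2*κ)*ε^(2*κ))*B^(2*k) :=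
            mul_le_mul hε2 hDk hDk0 (mul_nonneg hm2κ ht0)
          have e4 : 2*|k*(ε^2*D^k)+r₂| *(ε^2*U^2/D) ≤ 2*(XC*ε^(2*κ))*(1/3) :=
            mul_le_mul (mul_le_mul_of_nonneg_left hX (by norm_num)) hUUD hUUD0
              (mul_nonneg (by norm_num) (mul_nonneg hXC0 ht0))
          linarith [hr₁m]
      _ = CE3 * ε^(2*κ) := by rw [hCE3def]; ring
      _ ≤ (CE1 + CE2 + CE3) * ε^(2*κ) := by
          linarith [mul_nonneg hCE1 ht0, mul_nonneg hCE2 ht0]
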